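/- Let 1 ≤ p_1 ≤ ... ≤ p_d ≤ n and let I = {i_1 < i_2 < ... < i_t} ⊆ [d] be nonempty. Then |∩_{i ∈ I} L_i(p_i)| = (d! / (i_1! (i_2 - i_1)! ... (i_t - i_{t-1})! (d - i_t)!)) · (p_{i_1} - 1)^{i_1} · ∏_{j=2}^{t} (p_{i_j} - p_{i_{j-1}})^{i_j - i_{j-1}} · (n - p_{i_t} + 1)^{d - i_t}. -/

import Mathlib

/-- The `d`-tuples with entries in `[n] = {1,…,n}`. -/
def tuples (n d : ℕ) : Finset (Fin d → ℕ) :=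
  Fintype.piFinset fun _ => Finset.Icc 1 n

/-- `L_i(t)`: the set of `x ∈ [n]^d` having exactly `i` coordinates
strictly smaller than `t`. -/
def L (n d i t : ℕ) : Finset (Fin d → ℕ) :=
  (tuples n d).filter fun x => (Finset.univ.filter fun j => x j < t).card = i

lemma count_fibers {ι : Type*} [Fintype ι] [DecidableEq ι] (T : Finset ℕ)
    (S : ℕ → Finset ℕ) (m : ℕ → ℕ) :
    ∀ (k : ℕ) (s : Finset ι), (∀ j, j < k → S j ⊆ T) →
    (∀ j j', j < j' → j' < k → Disjoint (S j) (S j')) →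
    s.card = ∑ j ∈ Finset.range k, m j →
    ((Fintype.piFinset fun i => if i ∈ s then T else {0}).filter
        fun x => ∀ j, j < k → (s.filter fun c => x c ∈ S j).card = m j).card =
      Nat.multinomial (Finset.range k) m * ∏ j ∈ Finset.range k, (S j).card ^ m j := by
  intro k
  induction k with
  | zero =>
    intro s _ _ hcard
    simp only [Finset.sum_range_zero, Finset.card_eq_zero] at hcard
    subst hcard
    rw [Finset.filter_true_of_mem (fun x _ j hj => by omega)]
    simp [Fintype.card_piFinset]
  | succ k IH =>
    intro s hsub hdisj hcard
    have hdS : ∀ j j', j ≠ j' → j < k + 1 → j' < k + 1 → ∀ a, a ∈ S j → a ∉ S j' := by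
      intro j j' hne hj hj' a ha ha'
      rcases Nat.lt_or_ge j j' with h | h
      · exact (Finset.disjoint_left.1 (hdisj j j' h hj')) ha ha'
      · exact (Finset.disjoint_left.1 (hdisj j' j (lt_of_le_of_ne h (Ne.symm hne)) hj)) ha' ha
    set F := ((Fintype.piFinset fun i => if i ∈ s then T else {0}).filter
        fun x => ∀ j, j < k + 1 → (s.filter fun c => x c ∈ S j).card = m j) with hF
    have hmaps : ∀ x ∈ F, (s.filter fun c => x c ∈ S k) ∈ s.powersetCard (m k) := by
      intro x hx
      rw [Finset.mem_powersetCard]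
      exact ⟨Finset.filter_subset _ _, (Finset.mem_filter.1 hx).2 k (by omega)⟩
    rw [Finset.card_eq_sum_card_fiberwise hmaps]
    have hfiber : ∀ A ∈ s.powersetCard (m k),
        (F.filter fun x => (s.filter fun c => x c ∈ S k) = A).card =
          (S k).card ^ m k *
            (Nat.multinomial (Finset.range k) m * ∏ j ∈ Finset.range k, (S j).card ^ m j) := by
      intro A hA
      rw [Finset.mem_powersetCard] at hA
      obtain ⟨hAs, hAcard⟩ := hA
      have hsAcard : (s \ A).card = ∑ j ∈ Finset.range k, m j := by
        rw [Finset.card_sdiff_of_subset hAs, hcard, Finset.sum_range_succ]; omega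
      have key : (F.filter fun x => (s.filter fun c => x c ∈ S k) = A).card =
          ((Fintype.piFinset fun i => if i ∈ A then S k else {0}) ×ˢ
            ((Fintype.piFinset fun i => if i ∈ s \ A then T else {0}).filter
              fun z => ∀ j, j < k → ((s \ A).filter fun c => z c ∈ S j).card = m j)).card := by
        apply Finset.card_nbij'
          (fun x => (fun i => if i ∈ A then x i else 0, fun i => if i ∈ s \ A then x i else 0))
          (fun yz => fun i => if i ∈ A then yz.1 i else yz.2 i)
        · intro x hx
          simp only [Finset.mem_coe, Finset.mem_filter, hF, Fintype.mem_piFinset] at hx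
          obtain ⟨⟨hx1, hx2⟩, hx3⟩ := hx
          simp only [Finset.mem_coe, Finset.mem_product, Fintype.mem_piFinset, Finset.mem_filter]
          refine ⟨fun i => ?_, ⟨fun i => ?_, fun j hj => ?_⟩⟩
          · by_cases hi : i ∈ A
            · rw [if_pos hi, if_pos hi]
              have hmem : i ∈ s.filter fun c => x c ∈ S k := hx3 ▸ hi
              exact (Finset.mem_filter.1 hmem).2
            · rw [if_neg hi, if_neg hi]; simp
          · by_cases hi : i ∈ s \ A
            · rw [if_pos hi, if_pos hi]
              have := hx1 i
              rwa [if_pos (Finset.mem_sdiff.1 hi).1] at this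
            · rw [if_neg hi, if_neg hi]; simp
          · have hset : ((s \ A).filter fun c => (if c ∈ s \ A then x c else 0) ∈ S j)
                = s.filter fun c => x c ∈ S j := by
              ext c
              simp only [Finset.mem_filter]
              constructor
              · rintro ⟨hcsA, hc⟩
                rw [if_pos hcsA] at hc
                exact ⟨(Finset.mem_sdiff.1 hcsA).1, hc⟩
              · rintro ⟨hcs, hc⟩
                have hcA : c ∉ A := by
                  intro hcA
                  have hmem : c ∈ s.filter fun c => x c ∈ S k := hx3 ▸ hcA
                  exact hdS j k (by omega) (by omega) (by omega) _ hc
                    (Finset.mem_filter.1 hmem).2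
                have hcsA : c ∈ s \ A := Finset.mem_sdiff.2 ⟨hcs, hcA⟩
                exact ⟨hcsA, by rw [if_pos hcsA]; exact hc⟩
            rw [hset]
            exact hx2 j (by omega)
        · rintro ⟨y, z⟩ hyz
          simp only [Finset.mem_coe, Finset.mem_product, Fintype.mem_piFinset, Finset.mem_filter] at hyz
          obtain ⟨hy, hz1, hz2⟩ := hyz
          have hcover : ∀ c ∈ s \ A, ∃ j, j < k ∧ z c ∈ S j := by
            intro c hc
            have hWsub : (Finset.range k).biUnion (fun j => (s \ A).filter fun c => z c ∈ S j)
                ⊆ s \ A := by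
              intro c' hc'
              simp only [Finset.mem_biUnion, Finset.mem_filter] at hc'
              obtain ⟨j, _, hj2, _⟩ := hc'
              exact hj2
            have hWcard : ((Finset.range k).biUnion
                (fun j => (s \ A).filter fun c => z c ∈ S j)).card = (s \ A).card := by
              rw [Finset.card_biUnion]
              · rw [hsAcard]
                exact Finset.sum_congr rfl fun j hj => hz2 j (Finset.mem_range.1 hj)
              · intro j hj j' hj' hne
                rw [Function.onFun, Finset.disjoint_left]
                intro a ha ha'
                exact hdS j j' hne (Nat.lt_succ_of_lt (Finset.mem_range.1 hj))
                  (Nat.lt_succ_of_lt (Finset.mem_range.1 hj')) _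
                  (Finset.mem_filter.1 ha).2 (Finset.mem_filter.1 ha').2
            have hW := Finset.eq_of_subset_of_card_le hWsub (le_of_eq hWcard.symm)
            rw [← hW] at hc
            simp only [Finset.mem_biUnion, Finset.mem_filter, Finset.mem_range] at hc
            obtain ⟨j, hj, _, hcj⟩ := hc
            exact ⟨j, hj, hcj⟩
          have hxmem : ∀ i, (if i ∈ A then y i else z i) ∈ (if i ∈ s then T else {0}) := by
            intro i
            by_cases hiA : i ∈ A
            · rw [if_pos hiA, if_pos (hAs hiA)]
              have := hy i; rw [if_pos hiA] at this
              exact hsub k (by omega) this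
            · rw [if_neg hiA]
              by_cases his : i ∈ s
              · rw [if_pos his]
                have := hz1 i
                rwa [if_pos (Finset.mem_sdiff.2 ⟨his, hiA⟩)] at this
              · rw [if_neg his]
                have := hz1 i
                rwa [if_neg (fun h => his (Finset.mem_sdiff.1 h).1)] at this
          have hfilk : (s.filter fun c => (if c ∈ A then y c else z c) ∈ S k) = A := by
            ext c
            simp only [Finset.mem_filter]
            constructor
            · rintro ⟨hcs, hc⟩
              by_contra hcA
              rw [if_neg hcA] at hc
              obtain ⟨j, hj, hcj⟩ := hcover c (Finset.mem_sdiff.2 ⟨hcs, hcA⟩)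
              exact hdS j k (by omega) (by omega) (by omega) _ hcj hc
            · intro hcA
              refine ⟨hAs hcA, ?_⟩
              rw [if_pos hcA]
              have := hy c; rwa [if_pos hcA] at this
          simp only [Finset.mem_coe, Finset.mem_filter, hF, Fintype.mem_piFinset]
          refine ⟨⟨hxmem, fun j hj => ?_⟩, hfilk⟩
          rcases Nat.lt_or_ge j k with hjk | hjk
          · have hset : (s.filter fun c => (if c ∈ A then y c else z c) ∈ S j)
                = (s \ A).filter fun c => z c ∈ S j := by
              ext c
              simp only [Finset.mem_filter]
              constructor
              · rintro ⟨hcs, hc⟩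
                by_cases hcA : c ∈ A
                · rw [if_pos hcA] at hc
                  have hyc := hy c; rw [if_pos hcA] at hyc
                  exact absurd hc (hdS k j (by omega) (by omega) (by omega) _ hyc)
                · rw [if_neg hcA] at hc
                  exact ⟨Finset.mem_sdiff.2 ⟨hcs, hcA⟩, hc⟩
              · rintro ⟨hcsA, hc⟩
                obtain ⟨hcs, hcA⟩ := Finset.mem_sdiff.1 hcsA
                exact ⟨hcs, by rw [if_neg hcA]; exact hc⟩
            rw [hset]
            exact hz2 j hjk
          · have : j = k := by omega
            subst this
            rw [hfilk, hAcard]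
        · intro x hx
          simp only [Finset.mem_coe, Finset.mem_filter, hF, Fintype.mem_piFinset] at hx
          obtain ⟨⟨hx1, _⟩, hx3⟩ := hx
          funext i
          dsimp only
          by_cases hiA : i ∈ A
          · rw [if_pos hiA, if_pos hiA]
          · rw [if_neg hiA]
            by_cases his : i ∈ s
            · rw [if_pos (Finset.mem_sdiff.2 ⟨his, hiA⟩)]
            · rw [if_neg (fun h => his (Finset.mem_sdiff.1 h).1)]
              have := hx1 i; rw [if_neg his] at this
              exact (Finset.mem_singleton.1 this).symm
        · rintro ⟨y, z⟩ hyz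
          simp only [Finset.mem_coe, Finset.mem_product, Fintype.mem_piFinset, Finset.mem_filter] at hyz
          obtain ⟨hy, hz1, _⟩ := hyz
          apply Prod.ext
          · funext i
            dsimp only
            by_cases hiA : i ∈ A
            · rw [if_pos hiA, if_pos hiA]
            · rw [if_neg hiA]
              have := hy i; rw [if_neg hiA] at this
              exact (Finset.mem_singleton.1 this).symm
          · funext i
            dsimp only
            by_cases hisA : i ∈ s \ A
            · rw [if_pos hisA, if_neg (Finset.mem_sdiff.1 hisA).2]
            · rw [if_neg hisA]
              have := hz1 i; rw [if_neg hisA] at this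
              exact (Finset.mem_singleton.1 this).symm
      rw [key, Finset.card_product, Fintype.card_piFinset, IH (s \ A)
        (fun j hj => hsub j (Nat.lt_succ_of_lt hj))
        (fun j j' h h' => hdisj j j' h (Nat.lt_succ_of_lt h')) hsAcard]
      congr 1
      simp only [apply_ite Finset.card, Finset.card_singleton]
      rw [Finset.prod_ite_mem, Finset.univ_inter, Finset.prod_const, hAcard]
    rw [Finset.sum_congr rfl hfiber, Finset.sum_const, Finset.card_powersetCard, hcard,
      Finset.range_add_one, Nat.multinomial_insert (by simp), Finset.prod_insert (by simp),
      Finset.sum_insert (by simp), smul_eq_mul]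
    ring

lemma tele (f : ℕ → ℕ) (hf : ∀ j, f j ≤ f (j + 1)) (K : ℕ) :
    ∑ j ∈ Finset.range K, (f (j + 1) - f j) = f K - f 0 := by
  induction K with
  | zero => simp
  | succ K ih =>
    rw [Finset.sum_range_succ, ih]
    have h0K : f 0 ≤ f K := monotone_nat_of_le_succ hf (Nat.zero_le K)
    have := hf K
    omega

lemma prod_filter_fin (t : ℕ) (f : Fin t → ℕ) (g : ℕ → ℕ)
    (h : ∀ (j : ℕ) (hj : j < t), 1 ≤ j → g j = f ⟨j, hj⟩) :
    ∏ j ∈ Finset.univ.filter (fun j : Fin t => 0 < j.val), f j = ∏ j ∈ Finset.Ico 1 t, g j := by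
  refine Finset.prod_bij' (fun (a : Fin t) _ => (a.val : ℕ))
    (fun (a : ℕ) (ha : a ∈ Finset.Ico 1 t) => (⟨a, (Finset.mem_Ico.1 ha).2⟩ : Fin t))
    ?_ ?_ ?_ ?_ ?_
  · intro a ha
    simp only [Finset.mem_filter, Finset.mem_univ, true_and] at ha
    exact Finset.mem_Ico.2 ⟨ha, a.isLt⟩
  · intro a ha
    simp only [Finset.mem_filter, Finset.mem_univ, true_and]
    exact (Finset.mem_Ico.1 ha).1
  · intro a ha; rfl
  · intro a ha; rfl
  · intro a ha
    simp only [Finset.mem_filter, Finset.mem_univ, true_and] at ha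
    exact (h a.val a.isLt ha).symm

set_option maxHeartbeats 1000000 in
theorem card_inter_L (n d t : ℕ) (ht : 0 < t) (p : ℕ → ℕ)
    (hpmono : ∀ j k, 1 ≤ j → j ≤ k → k ≤ d → p j ≤ p k)
    (hp : ∀ j, 1 ≤ j → j ≤ d → 1 ≤ p j ∧ p j ≤ n)
    (ii : Fin t → ℕ) (hmono : StrictMono ii)
    (hlb : 1 ≤ ii ⟨0, ht⟩) (hub : ii ⟨t - 1, by omega⟩ ≤ d) :
    ((tuples n d).filter fun x => ∀ j : Fin t,
        (Finset.univ.filter fun c => x c < p (ii j)).card = ii j).card =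
      Nat.factorial d /
          (Nat.factorial (ii ⟨0, ht⟩) *
            (∏ j ∈ Finset.univ.filter fun j : Fin t => 0 < j.val,
              Nat.factorial (ii j - ii ⟨j.val - 1, by have := j.isLt; omega⟩)) *
            Nat.factorial (d - ii ⟨t - 1, by omega⟩)) *
        (p (ii ⟨0, ht⟩) - 1) ^ ii ⟨0, ht⟩ *
        (∏ j ∈ Finset.univ.filter fun j : Fin t => 0 < j.val,
          (p (ii j) - p (ii ⟨j.val - 1, by have := j.isLt; omega⟩)) ^
            (ii j - ii ⟨j.val - 1, by have := j.isLt; omega⟩)) *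
        (n - p (ii ⟨t - 1, by omega⟩) + 1) ^ (d - ii ⟨t - 1, by omega⟩) := by
  -- extended index function, thresholds and prefix counts as opaque functions
  obtain ⟨II, hIIval, hIItop⟩ : ∃ II : ℕ → ℕ,
      (∀ (j : ℕ) (h : j < t), II j = ii ⟨j, h⟩) ∧ (∀ j, t ≤ j → II j = d) :=
    ⟨fun j => if h : j < t then ii ⟨j, h⟩ else d,
      fun j h => dif_pos h, fun j h => dif_neg (by omega)⟩
  obtain ⟨q, hq0, hqval, hqtop⟩ : ∃ q : ℕ → ℕ, q 0 = 1 ∧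
      (∀ j, 1 ≤ j → j ≤ t → q j = p (II (j - 1))) ∧ (∀ j, t < j → q j = n + 1) :=
    ⟨fun j => if j = 0 then 1 else if j ≤ t then p (II (j - 1)) else n + 1, by simp,
      fun j h1 h2 => by beta_reduce; rw [if_neg (by omega : ¬ j = 0), if_pos h2],
      fun j h => by beta_reduce; rw [if_neg (by omega : ¬ j = 0), if_neg (by omega : ¬ j ≤ t)]⟩
  obtain ⟨e, he0, heval, hetop⟩ : ∃ e : ℕ → ℕ, e 0 = 0 ∧
      (∀ j, 1 ≤ j → j ≤ t → e j = II (j - 1)) ∧ (∀ j, t < j → e j = d) :=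
    ⟨fun j => if j = 0 then 0 else if j ≤ t then II (j - 1) else d, by simp,
      fun j h1 h2 => by beta_reduce; rw [if_neg (by omega : ¬ j = 0), if_pos h2],
      fun j h => by beta_reduce; rw [if_neg (by omega : ¬ j = 0), if_neg (by omega : ¬ j ≤ t)]⟩
  obtain ⟨m, hmdef⟩ : ∃ m : ℕ → ℕ, ∀ j, m j = e (j + 1) - e j := ⟨_, fun _ => rfl⟩
  obtain ⟨S, hSdef⟩ : ∃ S : ℕ → Finset ℕ, ∀ j, S j = Finset.Ico (q j) (q (j + 1)) :=
    ⟨_, fun _ => rfl⟩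
  have hIImono : ∀ j k, j ≤ k → II j ≤ II k := by
    intro j k hjk
    rcases Nat.lt_or_ge j t with hj | hj
    · rcases Nat.lt_or_ge k t with hk | hk
      · rw [hIIval j hj, hIIval k hk]
        exact hmono.monotone (Fin.mk_le_mk.2 hjk)
      · rw [hIIval j hj, hIItop k hk]
        exact le_trans (hmono.monotone (Fin.mk_le_mk.2 (by omega))) hub
    · rw [hIItop j hj, hIItop k (by omega)]
  have hII1 : ∀ j, 1 ≤ II j := by
    intro j
    calc 1 ≤ II 0 := by rw [hIIval 0 ht]; exact hlb
    _ ≤ II j := hIImono 0 j (Nat.zero_le j)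
  have hIId : ∀ j, II j ≤ d := by
    intro j
    rcases Nat.lt_or_ge j t with hj | hj
    · rw [hIIval j hj]
      exact le_trans (hmono.monotone (Fin.mk_le_mk.2 (by omega))) hub
    · rw [hIItop j hj]
  have hpII : ∀ j, 1 ≤ p (II j) ∧ p (II j) ≤ n := fun j => hp _ (hII1 j) (hIId j)
  -- q facts
  have hqstep : ∀ j, q j ≤ q (j + 1) := by
    intro j
    rcases Nat.eq_zero_or_pos j with h0 | h1
    · subst h0
      rw [hq0, hqval 1 le_rfl ht]
      exact (hpII 0).1
    · rcases Nat.lt_or_ge (j + 1) (t + 1) with h2 | h2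
      · rw [hqval j h1 (by omega), hqval (j + 1) (by omega) (by omega)]
        have : j + 1 - 1 = j := by omega
        rw [this]
        exact hpmono _ _ (hII1 _) (hIImono _ _ (by omega)) (hIId _)
      · rcases Nat.lt_or_ge j (t + 1) with h3 | h3
        · rw [hqval j h1 (by omega), hqtop (j + 1) (by omega)]
          have := (hpII (j - 1)).2
          omega
        · rw [hqtop j (by omega), hqtop (j + 1) (by omega)]
  have hqmono : ∀ j k, j ≤ k → q j ≤ q k := fun j k h =>
    monotone_nat_of_le_succ hqstep h
  have hq1 : ∀ j, 1 ≤ q j := fun j => hq0 ▸ hqmono 0 j (Nat.zero_le j)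
  have hqn : ∀ j, q j ≤ n + 1 := by
    intro j
    rcases Nat.lt_or_ge t j with h | h
    · rw [hqtop j h]
    · calc q j ≤ q (t + 1) := hqmono j (t + 1) (by omega)
      _ = n + 1 := hqtop (t + 1) (by omega)
  -- e facts
  have hestep : ∀ j, e j ≤ e (j + 1) := by
    intro j
    rcases Nat.eq_zero_or_pos j with h0 | h1
    · subst h0; rw [he0]; exact Nat.zero_le _
    · rcases Nat.lt_or_ge (j + 1) (t + 1) with h2 | h2
      · rw [heval j h1 (by omega), heval (j + 1) (by omega) (by omega)]
        have : j + 1 - 1 = j := by omega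
        rw [this]
        exact hIImono _ _ (by omega)
      · rcases Nat.lt_or_ge j (t + 1) with h3 | h3
        · rw [heval j h1 (by omega), hetop (j + 1) (by omega)]
          exact hIId _
        · rw [hetop j (by omega), hetop (j + 1) (by omega)]
  have hsum : ∑ j ∈ Finset.range (t + 1), m j = d := by
    rw [Finset.sum_congr rfl (fun j _ => hmdef j), tele e hestep (t + 1),
      hetop (t + 1) (by omega), he0]
    omega
  -- S facts
  have hScard : ∀ j, (S j).card = q (j + 1) - q j := fun j => by
    rw [hSdef j]; exact Nat.card_Ico _ _
  have hSsub : ∀ j, j < t + 1 → S j ⊆ Finset.Icc 1 n := by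
    intro j _
    rw [← Finset.Ico_add_one_right_eq_Icc, hSdef j]
    exact Finset.Ico_subset_Ico (hq1 j) (hqn (j + 1))
  have hSdisj : ∀ j j', j < j' → j' < t + 1 → Disjoint (S j) (S j') := by
    intro j j' hjj' _
    rw [Finset.disjoint_left]
    intro a ha ha'
    rw [hSdef] at ha ha'
    simp only [Finset.mem_Ico] at ha ha'
    have := hqmono (j + 1) j' (by omega)
    omega
  -- set equality
  have hsetEq : ((tuples n d).filter fun x => ∀ j : Fin t,
        (Finset.univ.filter fun c => x c < p (ii j)).card = ii j) =
      ((Fintype.piFinset fun i : Fin d =>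
          if i ∈ (Finset.univ : Finset (Fin d)) then Finset.Icc 1 n else {0}).filter
        fun x => ∀ j, j < t + 1 →
          ((Finset.univ : Finset (Fin d)).filter fun c => x c ∈ S j).card = m j) := by
    ext x
    simp only [Finset.mem_filter, tuples, Fintype.mem_piFinset, Finset.mem_univ, if_true]
    constructor
    · rintro ⟨hx, hth⟩
      refine ⟨hx, fun j hj => ?_⟩
      have idC : ∀ a b : ℕ, a ≤ b → (Finset.univ.filter fun c => x c < b).card =
          (Finset.univ.filter fun c => x c < a).card +
          (Finset.univ.filter fun c => x c ∈ Finset.Ico a b).card := by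
        intro a b hab
        have hunion : ((Finset.univ.filter fun c => x c < a) ∪
            (Finset.univ.filter fun c => x c ∈ Finset.Ico a b)) =
            Finset.univ.filter fun c => x c < b := by
          ext c
          simp only [Finset.mem_union, Finset.mem_filter, Finset.mem_univ, true_and,
            Finset.mem_Ico]
          omega
        have hdisjU : Disjoint (Finset.univ.filter fun c => x c < a)
            (Finset.univ.filter fun c => x c ∈ Finset.Ico a b) := by
          rw [Finset.disjoint_left]
          intro c hc hc'
          simp only [Finset.mem_filter, Finset.mem_univ, true_and, Finset.mem_Ico] at hc hc'
          omega
        rw [← hunion, Finset.card_union_of_disjoint hdisjU]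
      have hCq : ∀ jj, jj ≤ t + 1 → (Finset.univ.filter fun c => x c < q jj).card = e jj := by
        intro jj hjj
        rcases Nat.eq_zero_or_pos jj with h0 | h1
        · subst h0
          rw [hq0, he0, Finset.card_eq_zero, Finset.filter_eq_empty_iff]
          intro c _
          have := Finset.mem_Icc.1 (hx c)
          omega
        · rcases Nat.lt_or_ge jj (t + 1) with h2 | h2
          · rw [hqval jj h1 (by omega), heval jj h1 (by omega), hIIval (jj - 1) (by omega)]
            exact hth ⟨jj - 1, by omega⟩
          · have hjj' : jj = t + 1 := by omega
            subst hjj'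
            rw [hqtop (t + 1) (by omega), hetop (t + 1) (by omega),
              Finset.filter_true_of_mem, Finset.card_univ, Fintype.card_fin]
            intro c _
            have := Finset.mem_Icc.1 (hx c)
            omega
      have h1 := hCq j (by omega)
      have h2 := hCq (j + 1) (by omega)
      have h3 := idC (q j) (q (j + 1)) (hqstep j)
      have h4 := hestep j
      rw [hmdef j]
      rw [show (Finset.univ.filter fun c => x c ∈ S j) =
          (Finset.univ.filter fun c => x c ∈ Finset.Ico (q j) (q (j + 1))) by rw [hSdef]]
      omega
    · rintro ⟨hx, hmj⟩
      refine ⟨hx, fun j => ?_⟩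
      have idC : ∀ a b : ℕ, a ≤ b → (Finset.univ.filter fun c => x c < b).card =
          (Finset.univ.filter fun c => x c < a).card +
          (Finset.univ.filter fun c => x c ∈ Finset.Ico a b).card := by
        intro a b hab
        have hunion : ((Finset.univ.filter fun c => x c < a) ∪
            (Finset.univ.filter fun c => x c ∈ Finset.Ico a b)) =
            Finset.univ.filter fun c => x c < b := by
          ext c
          simp only [Finset.mem_union, Finset.mem_filter, Finset.mem_univ, true_and,
            Finset.mem_Ico]
          omega
        have hdisjU : Disjoint (Finset.univ.filter fun c => x c < a)
            (Finset.univ.filter fun c => x c ∈ Finset.Ico a b) := by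
          rw [Finset.disjoint_left]
          intro c hc hc'
          simp only [Finset.mem_filter, Finset.mem_univ, true_and, Finset.mem_Ico] at hc hc'
          omega
        rw [← hunion, Finset.card_union_of_disjoint hdisjU]
      have hCq : ∀ jj, jj ≤ t + 1 → (Finset.univ.filter fun c => x c < q jj).card = e jj := by
        intro jj
        induction jj with
        | zero =>
          intro _
          rw [hq0, he0, Finset.card_eq_zero, Finset.filter_eq_empty_iff]
          intro c _
          have := Finset.mem_Icc.1 (hx c)
          omega
        | succ jj iH =>
          intro hjj
          have h1 := iH (by omega)
          have h2 := hmj jj (by omega)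
          have h3 := idC (q jj) (q (jj + 1)) (hqstep jj)
          have h4 := hestep jj
          rw [hmdef jj] at h2
          rw [show (Finset.univ.filter fun c => x c ∈ S jj) =
              (Finset.univ.filter fun c => x c ∈ Finset.Ico (q jj) (q (jj + 1))) by
            rw [hSdef]] at h2
          omega
      have h1 := hCq (j.val + 1) (by have := j.isLt; omega)
      rw [hqval (j.val + 1) (by omega) (by have := j.isLt; omega),
        heval (j.val + 1) (by omega) (by have := j.isLt; omega)] at h1
      have h2 : j.val + 1 - 1 = j.val := by omega
      rw [h2, hIIval j.val j.isLt] at h1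
      have h3 : (⟨j.val, j.isLt⟩ : Fin t) = j := by
        apply Fin.ext; rfl
      rw [h3] at h1
      exact h1
  -- apply the counting lemma
  rw [hsetEq, count_fibers (Finset.Icc 1 n) S m (t + 1) Finset.univ hSsub hSdisj
    (by rw [Finset.card_univ, Fintype.card_fin, hsum])]
  -- endpoint and middle values
  have hm0 : m 0 = ii ⟨0, ht⟩ := by
    rw [hmdef, he0, heval 1 le_rfl ht]
    simp only [Nat.sub_zero]
    exact hIIval 0 ht
  have hmt : m t = d - ii ⟨t - 1, Nat.sub_lt ht Nat.one_pos⟩ := by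
    rw [hmdef, hetop (t + 1) (by omega), heval t ht le_rfl, hIIval (t - 1) (by omega)]
  have hmmid : ∀ (a : ℕ) (ha : a < t), 1 ≤ a →
      m a = ii ⟨a, ha⟩ - ii ⟨a - 1, lt_of_le_of_lt (Nat.sub_le a 1) ha⟩ := by
    intro a ha h1
    have h2 : a + 1 - 1 = a := by omega
    rw [hmdef a]
    rw [heval (a + 1) (Nat.succ_le_succ (Nat.zero_le a)) ha]
    rw [heval a h1 (by omega)]
    rw [h2]
    rw [hIIval a ha]
    rw [hIIval (a - 1) (by omega)]
  have hs0 : (S 0).card = p (ii ⟨0, ht⟩) - 1 := by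
    rw [hScard, hq0, hqval 1 le_rfl ht,
      show II (1 - 1) = ii ⟨0, ht⟩ from hIIval 0 ht]
  have hst : (S t).card = n - p (ii ⟨t - 1, Nat.sub_lt ht Nat.one_pos⟩) + 1 := by
    rw [hScard, hqtop (t + 1) (by omega), hqval t ht le_rfl, hIIval (t - 1) (by omega)]
    have := (hp (ii ⟨t - 1, Nat.sub_lt ht Nat.one_pos⟩) (by
      rw [← hIIval (t - 1) (by omega)]; exact hII1 _) (by
      rw [← hIIval (t - 1) (by omega)]; exact hIId _)).2
    omega
  have hsmid : ∀ (a : ℕ) (ha : a < t), 1 ≤ a →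
      (S a).card = p (ii ⟨a, ha⟩) - p (ii ⟨a - 1, lt_of_le_of_lt (Nat.sub_le a 1) ha⟩) := by
    intro a ha h1
    rw [hScard, hqval (a + 1) (by omega) (by omega), hqval a h1 (by omega)]
    have h2 : a + 1 - 1 = a := by omega
    rw [h2, hIIval a ha, hIIval (a - 1) (by omega)]
  -- split products
  have hsplit : ∀ g : ℕ → ℕ, ∏ j ∈ Finset.range (t + 1), g j =
      g 0 * (∏ j ∈ Finset.Ico 1 t, g j) * g t := by
    intro g
    rw [Finset.prod_range_succ, Finset.range_eq_Ico, Finset.prod_eq_prod_Ico_succ_bot ht]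
  -- convert Fin-filter products to Ico products
  have hfactprod : (∏ j ∈ Finset.univ.filter fun j : Fin t => 0 < j.val,
      Nat.factorial (ii j - ii ⟨j.val - 1, lt_of_le_of_lt (Nat.sub_le _ _) j.isLt⟩)) =
      ∏ j ∈ Finset.Ico 1 t, Nat.factorial (m j) := by
    apply prod_filter_fin
    intro j hj h1
    rw [hmmid j hj h1]
  have hpowprod : (∏ j ∈ Finset.univ.filter fun j : Fin t => 0 < j.val,
      (p (ii j) - p (ii ⟨j.val - 1, lt_of_le_of_lt (Nat.sub_le _ _) j.isLt⟩)) ^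
        (ii j - ii ⟨j.val - 1, lt_of_le_of_lt (Nat.sub_le _ _) j.isLt⟩)) =
      ∏ j ∈ Finset.Ico 1 t, (S j).card ^ m j := by
    apply prod_filter_fin
    intro j hj h1
    rw [hmmid j hj h1, hsmid j hj h1]
  rw [hfactprod, hpowprod]
  have hmulti : Nat.multinomial (Finset.range (t + 1)) m =
      Nat.factorial d / ∏ j ∈ Finset.range (t + 1), Nat.factorial (m j) := by
    rw [Nat.multinomial, hsum]
  rw [hmulti, hsplit (fun j => Nat.factorial (m j)), hsplit (fun j => (S j).card ^ m j),
    hm0, hmt, hs0, hst]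
  ring
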